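/- A Rotfel'd-type determinant inequality: Let K, K₁, K₂, …, K_m be positive-definite real d×d matrices. Then det(K + K₁ + ⋯ + K_m) · det(K)^{m−1} ≤ ∏_{j=1}^m det(K + K_j); equivalently, det(K + K₁ + ⋯ + K_m) ≤ det(K)^{−(m−1)} · ∏_{j=1}^m det(K + K_j). -/

import Mathlib

open scoped BigOperators
open Matrix

set_option maxHeartbeats 1000000

namespace Matrix.PosSemidef

open scoped MatrixOrder

/-- square root of a psd matrix (via the continuous functional calculus). -/
noncomputable def sqrt {d : ℕ} {A : Matrix (Fin d) (Fin d) ℝ} (_hA : A.PosSemidef) :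
    Matrix (Fin d) (Fin d) ℝ := CFC.sqrt A

lemma sqrt_mul_self {d : ℕ} {A : Matrix (Fin d) (Fin d) ℝ} (hA : A.PosSemidef) :
    hA.sqrt * hA.sqrt = A := CFC.sqrt_mul_sqrt_self A hA.nonneg

lemma posSemidef_sqrt {d : ℕ} {A : Matrix (Fin d) (Fin d) ℝ} (hA : A.PosSemidef) :
    hA.sqrt.PosSemidef := (CFC.sqrt_nonneg A).posSemidef

end Matrix.PosSemidef

namespace RotfeldAux

variable {d : ℕ}

/-- `det (1 + P) ≥ 1` for psd `P`. -/
lemma one_le_det_one_add {P : Matrix (Fin d) (Fin d) ℝ} (hP : P.PosSemidef) :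
    1 ≤ (1 + P).det := by
  have hH := hP.isHermitian
  set f : Fin d → ℝ := RCLike.ofReal ∘ hH.eigenvalues with hf
  set U := (hH.eigenvectorUnitary : Matrix (Fin d) (Fin d) ℝ) with hU
  have hUU : U * star U = 1 := Matrix.mem_unitaryGroup_iff.mp hH.eigenvectorUnitary.2
  have h1 : (1 + P) = U * (1 + Matrix.diagonal f) * star U := by
    rw [Matrix.mul_add, Matrix.add_mul, Matrix.mul_one, hUU]
    congr 1
    exact hH.spectral_theorem
  have hdetU : U.det * (star U).det = 1 := by
    rw [← Matrix.det_mul, hUU, Matrix.det_one]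
  have h2 : (1 + P).det = (1 + Matrix.diagonal f).det := by
    rw [h1, Matrix.det_mul, Matrix.det_mul]
    calc U.det * (1 + Matrix.diagonal f).det * (star U).det
        = U.det * (star U).det * (1 + Matrix.diagonal f).det := by ring
      _ = _ := by rw [hdetU, one_mul]
  have h3 : (1 + Matrix.diagonal f) = Matrix.diagonal (fun i => 1 + f i) := by
    rw [← Matrix.diagonal_one, Matrix.diagonal_add]
  rw [h2, h3, Matrix.det_diagonal]
  calc (1:ℝ) = ∏ _i : Fin d, 1 := by simp
    _ ≤ ∏ i : Fin d, (1 + f i) := by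
        refine Finset.prod_le_prod (fun i _ => zero_le_one) fun i _ => ?_
        have := hP.eigenvalues_nonneg i
        simp only [hf, Function.comp_apply, RCLike.ofReal_real_eq_id, id_eq]
        linarith

/-- factorization: `det (A + B) = det A * det (1 + T A⁻¹ T)` where `T = sqrt B`. -/
lemma det_add_eq {A B : Matrix (Fin d) (Fin d) ℝ} (hA : A.PosDef) (hB : B.PosSemidef) :
    (A + B).det = A.det * (1 + hB.sqrt * A⁻¹ * hB.sqrt).det := by
  have hdet : IsUnit A.det := isUnit_iff_ne_zero.mpr (ne_of_gt hA.det_pos)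
  have hkey : A + B = A * (1 + A⁻¹ * B) := by
    rw [Matrix.mul_add, Matrix.mul_one, ← Matrix.mul_assoc,
      Matrix.mul_nonsing_inv _ hdet, Matrix.one_mul]
  rw [hkey, Matrix.det_mul]
  congr 1
  have : A⁻¹ * B = (A⁻¹ * hB.sqrt) * hB.sqrt := by
    rw [Matrix.mul_assoc, hB.sqrt_mul_self]
  rw [this, Matrix.det_one_add_mul_comm, Matrix.mul_assoc]

/-- Loewner monotonicity of det: `det A ≤ det (A + B)` for pd `A`, psd `B`. -/
lemma det_le_det_add {A B : Matrix (Fin d) (Fin d) ℝ} (hA : A.PosDef) (hB : B.PosSemidef) :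
    A.det ≤ (A + B).det := by
  rw [det_add_eq hA hB]
  have hpsd : (hB.sqrt * A⁻¹ * hB.sqrt).PosSemidef := by
    have := (hA.posSemidef.inv).conjTranspose_mul_mul_same hB.sqrt
    rwa [hB.posSemidef_sqrt.isHermitian.eq] at this
  have := one_le_det_one_add hpsd
  nlinarith [hA.det_pos]

/-- inverse antitone at `1`: if `M` is pd with `M - 1` psd then `1 - M⁻¹` is psd. -/
lemma one_sub_inv_posSemidef {M : Matrix (Fin d) (Fin d) ℝ} (hM : M.PosDef)
    (h1 : (M - 1).PosSemidef) : (1 - M⁻¹).PosSemidef := by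
  have hMinv : M⁻¹.PosDef := hM.inv
  set N := hMinv.posSemidef.sqrt with hN
  have hNN : N * N = M⁻¹ := hMinv.posSemidef.sqrt_mul_self
  have hNdet : IsUnit N.det := by
    have : N.det * N.det = M⁻¹.det := by rw [← Matrix.det_mul, hNN]
    have hpos : (0:ℝ) < M⁻¹.det := hMinv.det_pos
    refine isUnit_iff_ne_zero.mpr fun h => ?_
    rw [h, mul_zero] at this
    linarith [this ▸ hpos]
  have hMeq : M = N⁻¹ * N⁻¹ := by
    rw [← Matrix.mul_inv_rev, hNN, Matrix.nonsing_inv_nonsing_inv _ (isUnit_iff_ne_zero.mpr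
      (ne_of_gt hM.det_pos))]
  have hkey : N * (M - 1) * N = 1 - M⁻¹ := by
    rw [Matrix.mul_sub, Matrix.mul_one, Matrix.sub_mul, hNN]
    congr 1
    rw [hMeq, ← Matrix.mul_assoc, Matrix.mul_nonsing_inv _ hNdet,
      Matrix.one_mul, Matrix.nonsing_inv_mul _ hNdet]
  have := h1.conjTranspose_mul_mul_same N
  rwa [hMinv.posSemidef.posSemidef_sqrt.isHermitian.eq, hkey] at this

/-- core: `det (1 + B + C) ≤ det (1 + B) * det (1 + C)` for psd `B, C`. -/
lemma det_one_add_add_le {B C : Matrix (Fin d) (Fin d) ℝ}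
    (hB : B.PosSemidef) (hC : C.PosSemidef) :
    (1 + B + C).det ≤ (1 + B).det * (1 + C).det := by
  have hM : (1 + C).PosDef := Matrix.PosDef.add_posSemidef Matrix.PosDef.one hC
  set T := hB.sqrt with hT
  have hTT : T * T = B := hB.sqrt_mul_self
  have hTH : Tᴴ = T := hB.posSemidef_sqrt.isHermitian.eq
  have hre : 1 + B + C = (1 + C) + B := by abel
  have h1 : (1 + B + C).det = (1 + C).det * (1 + T * (1 + C)⁻¹ * T).det := by
    rw [hre, det_add_eq hM hB]
  have hsub : ((1 + C) - 1).PosSemidef := by simpa using hC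
  have hdiff : (1 - (1 + C)⁻¹).PosSemidef := one_sub_inv_posSemidef hM hsub
  have hconj : (T * (1 - (1 + C)⁻¹) * T).PosSemidef := by
    have := hdiff.conjTranspose_mul_mul_same T
    rwa [hTH] at this
  have hinner : (1 + T * (1 + C)⁻¹ * T).PosDef := by
    refine Matrix.PosDef.add_posSemidef Matrix.PosDef.one ?_
    have := (hM.inv.posSemidef).conjTranspose_mul_mul_same T
    rwa [hTH] at this
  have hsum : (1 + T * (1 + C)⁻¹ * T) + (T * (1 - (1 + C)⁻¹) * T) = 1 + B := by
    rw [← hTT]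
    noncomm_ring
  have h2 : (1 + T * (1 + C)⁻¹ * T).det ≤ (1 + B).det := by
    have := det_le_det_add hinner hconj
    rwa [hsum] at this
  rw [h1, mul_comm]
  exact mul_le_mul_of_nonneg_right h2 hM.det_pos.le

/-- Rotfel'd three-matrix lemma: `det(A+B+C) * det A ≤ det(A+B) * det(A+C)`. -/
lemma det_add_add_mul_det_le {A B C : Matrix (Fin d) (Fin d) ℝ}
    (hA : A.PosDef) (hB : B.PosSemidef) (hC : C.PosSemidef) :
    (A + B + C).det * A.det ≤ (A + B).det * (A + C).det := by
  set S := hA.posSemidef.sqrt with hS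
  have hSS : S * S = A := hA.posSemidef.sqrt_mul_self
  have hSH : Sᴴ = S := hA.posSemidef.posSemidef_sqrt.isHermitian.eq
  have hSdet : IsUnit S.det := by
    have hm : S.det * S.det = A.det := by rw [← Matrix.det_mul, hSS]
    refine isUnit_iff_ne_zero.mpr fun h => ?_
    have := hA.det_pos
    rw [← hm, h, mul_zero] at this
    exact lt_irrefl _ this
  have hSinv : (S⁻¹).PosSemidef := hA.posSemidef.posSemidef_sqrt.inv
  have hSinvH : (S⁻¹)ᴴ = S⁻¹ := hSinv.isHermitian.eq
  have hfac : ∀ X : Matrix (Fin d) (Fin d) ℝ,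
      (A + X).det = A.det * (1 + S⁻¹ * X * S⁻¹).det := by
    intro X
    have : A + X = S * (1 + S⁻¹ * X * S⁻¹) * S := by
      rw [Matrix.mul_add, Matrix.mul_one, Matrix.add_mul, hSS]
      congr 1
      rw [← Matrix.mul_assoc, ← Matrix.mul_assoc, Matrix.mul_nonsing_inv _ hSdet,
        Matrix.one_mul, Matrix.mul_assoc, Matrix.nonsing_inv_mul _ hSdet, Matrix.mul_one]
    rw [this, Matrix.det_mul, Matrix.det_mul]
    rw [show S.det * (1 + S⁻¹ * X * S⁻¹).det * S.det
        = (S.det * S.det) * (1 + S⁻¹ * X * S⁻¹).det by ring, ← Matrix.det_mul, hSS]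
  have hconj : ∀ {X : Matrix (Fin d) (Fin d) ℝ}, X.PosSemidef →
      (S⁻¹ * X * S⁻¹).PosSemidef := by
    intro X hX
    have := hX.conjTranspose_mul_mul_same S⁻¹
    rwa [hSinvH] at this
  have hB' := hconj hB
  have hC' := hconj hC
  have hBC' : S⁻¹ * (B + C) * S⁻¹ = S⁻¹ * B * S⁻¹ + S⁻¹ * C * S⁻¹ := by
    noncomm_ring
  have hmain := det_one_add_add_le hB' hC'
  have e1 : (A + B + C).det = A.det * (1 + S⁻¹ * B * S⁻¹ + S⁻¹ * C * S⁻¹).det := by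
    rw [add_assoc, hfac (B + C), hBC', add_assoc]
  have e2 := hfac B
  have e3 := hfac C
  have hdA : (0:ℝ) < A.det := hA.det_pos
  calc (A + B + C).det * A.det
      = A.det * A.det * (1 + S⁻¹ * B * S⁻¹ + S⁻¹ * C * S⁻¹).det := by rw [e1]; ring
    _ ≤ A.det * A.det * ((1 + S⁻¹ * B * S⁻¹).det * (1 + S⁻¹ * C * S⁻¹).det) := by
        apply mul_le_mul_of_nonneg_left hmain (by positivity)
    _ = (A + B).det * (A + C).det := by rw [e2, e3]; ring

end RotfeldAux

/-- **A Rotfel'd-type determinant inequality.**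
For positive-definite `d × d` real matrices `K, K₁, …, K_m` (`m ≥ 1`),
`det(K + K₁ + ⋯ + K_m) · det(K)^{m-1} ≤ ∏ j, det(K + K_j)`. -/
theorem rotfeld_type_det_inequality
    {d m : ℕ} (hm : 0 < m)
    (K : Matrix (Fin d) (Fin d) ℝ) (Ks : Fin m → Matrix (Fin d) (Fin d) ℝ)
    (hK : K.PosDef) (hKs : ∀ j, (Ks j).PosDef) :
    (K + ∑ j, Ks j).det * K.det ^ (m - 1) ≤ ∏ j, (K + Ks j).det := by
  obtain ⟨n, rfl⟩ : ∃ n, m = n + 1 := ⟨m - 1, (Nat.succ_pred_eq_of_pos hm).symm⟩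
  clear hm
  simp only [Nat.add_sub_cancel]
  induction n with
  | zero =>
      simp
  | succ n ih =>
      have hsum : (∑ j : Fin (n + 1 + 1), Ks j)
          = (∑ j : Fin (n + 1), Ks j.castSucc) + Ks (Fin.last (n + 1)) :=
        Fin.sum_univ_castSucc Ks
      have hprod : (∏ j : Fin (n + 1 + 1), (K + Ks j).det)
          = (∏ j : Fin (n + 1), (K + Ks j.castSucc).det) * (K + Ks (Fin.last (n + 1))).det :=
        Fin.prod_univ_castSucc fun j => (K + Ks j).det
      set B := ∑ j : Fin (n + 1), Ks j.castSucc with hB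
      have hBpsd : B.PosSemidef :=
        Finset.sum_induction (fun j : Fin (n+1) => Ks j.castSucc) (fun M : Matrix (Fin d) (Fin d) ℝ => M.PosSemidef)
          (fun a b ha hb => ha.add hb) Matrix.PosSemidef.zero
          (fun (j : Fin (n+1)) _ => (hKs j.castSucc).posSemidef)
      have hCpsd : (Ks (Fin.last (n + 1))).PosSemidef := (hKs _).posSemidef
      have hstep := RotfeldAux.det_add_add_mul_det_le hK hBpsd hCpsd
      have hih := ih (fun j => Ks j.castSucc) (fun j => hKs j.castSucc)
      have hKBpos : (0:ℝ) < (K + Ks (Fin.last (n+1))).det :=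
        (hK.add_posSemidef hCpsd).det_pos
      have hKdpos : (0:ℝ) < K.det := hK.det_pos
      calc (K + ∑ j : Fin (n + 1 + 1), Ks j).det * K.det ^ (n + 1)
          = ((K + B + Ks (Fin.last (n + 1))).det * K.det) * K.det ^ n := by
            rw [hsum, ← add_assoc]; ring
        _ ≤ ((K + B).det * (K + Ks (Fin.last (n + 1))).det) * K.det ^ n :=
            mul_le_mul_of_nonneg_right hstep (by positivity)
        _ = (K + Ks (Fin.last (n + 1))).det * ((K + B).det * K.det ^ n) := by ring
        _ ≤ (K + Ks (Fin.last (n + 1))).det * ∏ j : Fin (n + 1), (K + Ks j.castSucc).det :=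
            mul_le_mul_of_nonneg_left hih hKBpos.le
        _ = ∏ j : Fin (n + 1 + 1), (K + Ks j).det := by rw [hprod]; ring
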